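/- Let V be a finite set, let σ ≥ 0 be a real number, let C ⊆ V be nonempty, and let s, s' : V → ℝ be nonnegative functions that agree at every node of V except possibly at one node v₀, where |s(v₀) − s'(v₀)| ≤ 1. Let u₁, …, u_K be pairwise distinct elements of C with K ≤ |C|, and define P_s = ∏_{k=1}^{K} (s(u_k)+2)^σ / (∑_{w ∈ C∖{u₁,…,u_{k−1}}} (s(w)+2)^σ), and P_{s'} analogously with s replaced by s'. Then |log(P_s / P_{s'})| ≤ Kσ·log 2. -/

import Mathlib

open Finset

lemma dplp_aux {V : Type*} [Fintype V] [DecidableEq V]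
    (σ : ℝ) (hσ : 0 ≤ σ) (C : Finset V)
    (s s' : V → ℝ) (hs' : ∀ v, 0 ≤ s' v)
    (hle : ∀ v, s' v ≤ s v) (hle1 : ∀ v, s v ≤ s' v + 1)
    (K : ℕ) (u : Fin K → V) (hu : Function.Injective u) (huC : ∀ k, u k ∈ C) :
    |Real.log
        ((∏ k : Fin K, (s (u k) + 2) ^ σ /
            ∑ w ∈ C \ Finset.image u (Finset.univ.filter (fun j => j < k)),
              (s w + 2) ^ σ) /
         (∏ k : Fin K, (s' (u k) + 2) ^ σ /
            ∑ w ∈ C \ Finset.image u (Finset.univ.filter (fun j => j < k)),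
              (s' w + 2) ^ σ))|
      ≤ K * σ * Real.log 2 := by
  have hs : ∀ v, 0 ≤ s v := fun v => le_trans (hs' v) (hle v)
  -- positivity of each term
  have htpos : ∀ (t : V → ℝ), (∀ v, 0 ≤ t v) → ∀ w : V, 0 < (t w + 2) ^ σ := by
    intro t ht w
    exact Real.rpow_pos_of_pos (by linarith [ht w]) σ
  have hmem : ∀ k : Fin K, u k ∈ C \ Finset.image u (Finset.univ.filter (fun j => j < k)) := by
    intro k
    rw [Finset.mem_sdiff]
    refine ⟨huC k, ?_⟩
    simp only [Finset.mem_image, Finset.mem_filter, Finset.mem_univ, true_and]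
    rintro ⟨j, hj, hjk⟩
    exact absurd (hu hjk) (ne_of_lt hj)
  have hDpos : ∀ (t : V → ℝ), (∀ v, 0 ≤ t v) → ∀ k : Fin K,
      0 < ∑ w ∈ C \ Finset.image u (Finset.univ.filter (fun j => j < k)), (t w + 2) ^ σ := by
    intro t ht k
    exact Finset.sum_pos (fun w _ => htpos t ht w) ⟨u k, hmem k⟩
  have l2 : (0:ℝ) < 2 := by norm_num
  have hfpos : ∀ k : Fin K, 0 < (s (u k) + 2) ^ σ /
      ∑ w ∈ C \ Finset.image u (Finset.univ.filter (fun j => j < k)), (s w + 2) ^ σ :=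
    fun k => div_pos (htpos s hs _) (hDpos s hs k)
  have hgpos : ∀ k : Fin K, 0 < (s' (u k) + 2) ^ σ /
      ∑ w ∈ C \ Finset.image u (Finset.univ.filter (fun j => j < k)), (s' w + 2) ^ σ :=
    fun k => div_pos (htpos s' hs' _) (hDpos s' hs' k)
  have hP : 0 < ∏ k : Fin K, (s (u k) + 2) ^ σ /
      ∑ w ∈ C \ Finset.image u (Finset.univ.filter (fun j => j < k)), (s w + 2) ^ σ :=
    Finset.prod_pos (fun k _ => hfpos k)
  have hP' : 0 < ∏ k : Fin K, (s' (u k) + 2) ^ σ /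
      ∑ w ∈ C \ Finset.image u (Finset.univ.filter (fun j => j < k)), (s' w + 2) ^ σ :=
    Finset.prod_pos (fun k _ => hgpos k)
  rw [Real.log_div hP.ne' hP'.ne', Real.log_prod (fun k _ => (hfpos k).ne'),
    Real.log_prod (fun k _ => (hgpos k).ne'), ← Finset.sum_sub_distrib]
  calc |∑ k : Fin K, (Real.log ((s (u k) + 2) ^ σ /
          ∑ w ∈ C \ Finset.image u (Finset.univ.filter (fun j => j < k)), (s w + 2) ^ σ) -
        Real.log ((s' (u k) + 2) ^ σ /
          ∑ w ∈ C \ Finset.image u (Finset.univ.filter (fun j => j < k)), (s' w + 2) ^ σ))|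
      ≤ ∑ k : Fin K, |Real.log ((s (u k) + 2) ^ σ /
          ∑ w ∈ C \ Finset.image u (Finset.univ.filter (fun j => j < k)), (s w + 2) ^ σ) -
        Real.log ((s' (u k) + 2) ^ σ /
          ∑ w ∈ C \ Finset.image u (Finset.univ.filter (fun j => j < k)), (s' w + 2) ^ σ)| :=
        Finset.abs_sum_le_sum_abs _ _
    _ ≤ ∑ _k : Fin K, σ * Real.log 2 := by
        apply Finset.sum_le_sum
        intro k _
        set a := (s (u k) + 2) ^ σ with ha
        set a' := (s' (u k) + 2) ^ σ with ha'
        set b := ∑ w ∈ C \ Finset.image u (Finset.univ.filter (fun j => j < k)), (s w + 2) ^ σ with hb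
        set b' := ∑ w ∈ C \ Finset.image u (Finset.univ.filter (fun j => j < k)), (s' w + 2) ^ σ with hb'
        have hapos : 0 < a := htpos s hs _
        have ha'pos : 0 < a' := htpos s' hs' _
        have hbpos : 0 < b := hDpos s hs k
        have hb'pos : 0 < b' := hDpos s' hs' k
        -- termwise bounds
        have hterm1 : ∀ v : V, (s' v + 2) ^ σ ≤ (s v + 2) ^ σ := fun v =>
          Real.rpow_le_rpow (by linarith [hs' v]) (by linarith [hle v]) hσ
        have hterm2 : ∀ v : V, (s v + 2) ^ σ ≤ 2 ^ σ * (s' v + 2) ^ σ := by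
          intro v
          rw [← Real.mul_rpow (by norm_num) (by linarith [hs' v])]
          exact Real.rpow_le_rpow (by linarith [hs v]) (by linarith [hle1 v, hs' v]) hσ
        have haa : a' ≤ a := hterm1 _
        have haa2 : a ≤ 2 ^ σ * a' := hterm2 _
        have hbb : b' ≤ b := Finset.sum_le_sum (fun w _ => hterm1 w)
        have hbb2 : b ≤ 2 ^ σ * b' := by
          rw [hb, hb', Finset.mul_sum]
          exact Finset.sum_le_sum (fun w _ => hterm2 w)
        have h2pos : (0:ℝ) < (2:ℝ) ^ σ := Real.rpow_pos_of_pos l2 σ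
        have hub : a / b ≤ 2 ^ σ * (a' / b') := by
          rw [← mul_div_assoc]
          exact div_le_div₀ (by positivity) haa2 hb'pos hbb
        have hlb : a' / b' ≤ 2 ^ σ * (a / b) := by
          rw [← mul_div_assoc, div_le_div_iff₀ hb'pos hbpos]
          nlinarith [mul_le_mul haa hbb2 hbpos.le hapos.le]
        rw [abs_le]
        have hlog2 : Real.log ((2:ℝ) ^ σ) = σ * Real.log 2 := Real.log_rpow l2 σ
        constructor
        · have := Real.log_le_log (div_pos ha'pos hb'pos) hlb
          rw [Real.log_mul h2pos.ne' (div_pos hapos hbpos).ne', hlog2] at this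
          linarith
        · have := Real.log_le_log (div_pos hapos hbpos) hub
          rw [Real.log_mul h2pos.ne' (div_pos ha'pos hb'pos).ne', hlog2] at this
          linarith
    _ = K * σ * Real.log 2 := by
        rw [Finset.sum_const, Finset.card_univ, Fintype.card_fin, nsmul_eq_mul]
        ring

open Finset

/-- DPLP with sensitivity `Δ = 1`, when the two score functions differ at a
single node (by at most 1), is `Kσ·log 2`-differentially private. -/
theorem dplp_privacy_cn_jc {V : Type*} [Fintype V] [DecidableEq V]
    (σ : ℝ) (hσ : 0 ≤ σ)
    (C : Finset V) (hC : C.Nonempty)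
    (s s' : V → ℝ)
    (hs : ∀ v, 0 ≤ s v) (hs' : ∀ v, 0 ≤ s' v)
    (v₀ : V) (hagree : ∀ v, v ≠ v₀ → s v = s' v) (hv₀ : |s v₀ - s' v₀| ≤ 1)
    (K : ℕ) (u : Fin K → V) (hu : Function.Injective u)
    (huC : ∀ k, u k ∈ C) (hK : K ≤ C.card) :
    |Real.log
        ((∏ k : Fin K, (s (u k) + 2) ^ σ /
            ∑ w ∈ C \ Finset.image u (Finset.univ.filter (fun j => j < k)),
              (s w + 2) ^ σ) /
         (∏ k : Fin K, (s' (u k) + 2) ^ σ /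
            ∑ w ∈ C \ Finset.image u (Finset.univ.filter (fun j => j < k)),
              (s' w + 2) ^ σ))|
      ≤ K * σ * Real.log 2 := by
  obtain ⟨h1, h2⟩ := abs_le.mp hv₀
  rcases le_total (s' v₀) (s v₀) with hc | hc
  · have hA : ∀ v, s' v ≤ s v := by
      intro v
      rcases eq_or_ne v v₀ with rfl | h
      · exact hc
      · exact (hagree v h).ge
    have hB : ∀ v, s v ≤ s' v + 1 := by
      intro v
      rcases eq_or_ne v v₀ with rfl | h
      · linarith
      · rw [hagree v h]; linarith [hs' v]
    exact dplp_aux σ hσ C s s' hs' hA hB K u hu huC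
  · have hA : ∀ v, s v ≤ s' v := by
      intro v
      rcases eq_or_ne v v₀ with rfl | h
      · exact hc
      · exact (hagree v h).le
    have hB : ∀ v, s' v ≤ s v + 1 := by
      intro v
      rcases eq_or_ne v v₀ with rfl | h
      · linarith
      · rw [hagree v h]; linarith [hs v]
    have key := dplp_aux σ hσ C s' s hs hA hB K u hu huC
    -- swap the ratio inside |log|
    have htpos : ∀ (t : V → ℝ), (∀ v, 0 ≤ t v) → ∀ w : V, 0 < (t w + 2) ^ σ := by
      intro t ht w
      exact Real.rpow_pos_of_pos (by linarith [ht w]) σ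
    have hmem : ∀ k : Fin K, u k ∈ C \ Finset.image u (Finset.univ.filter (fun j => j < k)) := by
      intro k
      rw [Finset.mem_sdiff]
      refine ⟨huC k, ?_⟩
      simp only [Finset.mem_image, Finset.mem_filter, Finset.mem_univ, true_and]
      rintro ⟨j, hj, hjk⟩
      exact absurd (hu hjk) (ne_of_lt hj)
    have hP : 0 < ∏ k : Fin K, (s (u k) + 2) ^ σ /
        ∑ w ∈ C \ Finset.image u (Finset.univ.filter (fun j => j < k)), (s w + 2) ^ σ :=
      Finset.prod_pos fun k _ => div_pos (htpos s hs _)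
        (Finset.sum_pos (fun w _ => htpos s hs w) ⟨u k, hmem k⟩)
    have hP' : 0 < ∏ k : Fin K, (s' (u k) + 2) ^ σ /
        ∑ w ∈ C \ Finset.image u (Finset.univ.filter (fun j => j < k)), (s' w + 2) ^ σ :=
      Finset.prod_pos fun k _ => div_pos (htpos s' hs' _)
        (Finset.sum_pos (fun w _ => htpos s' hs' w) ⟨u k, hmem k⟩)
    rw [Real.log_div hP.ne' hP'.ne', ← abs_neg, neg_sub, ← Real.log_div hP'.ne' hP.ne']
    exact key
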